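/- Let X be a symmetric positive semidefinite block matrix with blocks X_{ij} (1 ≤ i,j ≤ n), each block of size m×m, and let x_1,...,x_n ∈ ℝ^m be vectors such that the augmented matrix [[1, x^T],[x, X]] is positive semidefinite (where x is the concatenation of the x_i). Suppose X_{ii} = Diag(x_i) and 1^T x_i = 1 for all i. Then for all 1 ≤ i < j ≤ n, the off-diagonal blocks satisfy X_{ij} 1 = x_i and X_{ij}^T 1 = x_j. -/

import Mathlib

open Matrix

/-- The bordered matrix [[1, xᵀ],[x, X]]. -/
def bordered {N : Type*} (x : N → ℝ) (X : Matrix N N ℝ) :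
    Matrix (Unit ⊕ N) (Unit ⊕ N) ℝ :=
  Matrix.fromBlocks 1 (Matrix.replicateRow Unit x) (Matrix.replicateCol Unit x) X

/-- Theorem 1: the SDR constraints imply the LP marginalization constraints
`X_{ij} 1 = x_i` and `X_{ij}ᵀ 1 = x_j` on every off-diagonal block. -/
theorem sdr_marginalization (n m : ℕ) (X : Matrix (Fin n × Fin m) (Fin n × Fin m) ℝ)
    (x : Fin n → Fin m → ℝ)
    (hpsd : (bordered (fun p => x p.1 p.2) X).PosSemidef)
    (hdiag : ∀ i : Fin n, ∀ a b : Fin m,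
      X (i, a) (i, b) = if a = b then x i a else 0)
    (hsum : ∀ i : Fin n, ∑ a, x i a = 1) :
    ∀ i j : Fin n, i < j →
      (∀ a : Fin m, ∑ b, X (i, a) (j, b) = x i a) ∧
      (∀ b : Fin m, ∑ a, X (i, a) (j, b) = x j b) := by
  set M := bordered (fun p => x p.1 p.2) X with hM
  -- key claim: for all k, j, b : ∑ a, X (j,b) (k,a) = x j b
  have key : ∀ (k j : Fin n) (b : Fin m), ∑ a, X (j, b) (k, a) = x j b := by
    intro k j b
    set z : (Unit ⊕ Fin n × Fin m) → ℝ :=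
      Sum.elim (fun _ => -1) (fun p => if p.1 = k then 1 else 0) with hz
    have hmv_inl : (M *ᵥ z) (Sum.inl ()) = 0 := by
      simp only [mulVec, dotProduct, Fintype.sum_sum_type, hM, bordered, hz]
      simp only [fromBlocks_apply₁₁, fromBlocks_apply₁₂, Sum.elim_inl, Sum.elim_inr,
        Matrix.replicateRow_apply, Matrix.one_apply_eq, Fintype.sum_unique]
      rw [Fintype.sum_prod_type]
      simp only [mul_ite, mul_one, mul_zero]
      rw [Finset.sum_comm]
      simp [Finset.sum_ite_eq', hsum k]
    have hmv_inr : ∀ q, (M *ᵥ z) (Sum.inr q) = -x q.1 q.2 + ∑ a, X q (k, a) := by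
      intro q
      simp only [mulVec, dotProduct, Fintype.sum_sum_type, hM, bordered, hz]
      simp only [fromBlocks_apply₂₁, fromBlocks_apply₂₂, Sum.elim_inl, Sum.elim_inr,
        Matrix.replicateCol_apply, Fintype.sum_unique]
      rw [Fintype.sum_prod_type]
      simp only [mul_ite, mul_one, mul_zero]
      rw [Finset.sum_comm]
      simp [Finset.sum_ite_eq', add_comm]
    have hquad : star z ⬝ᵥ M *ᵥ z = 0 := by
      have : star z = z := by
        funext u; simp [hz]
      rw [this]
      rw [dotProduct, Fintype.sum_sum_type]
      rw [Fintype.sum_unique]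
      have h1 : z (Sum.inl ()) * (M *ᵥ z) (Sum.inl ()) = 0 := by
        rw [hmv_inl]; ring
      rw [h1]
      have h2 : ∀ q, z (Sum.inr q) * (M *ᵥ z) (Sum.inr q)
          = (if q.1 = k then 1 else 0) * (-x q.1 q.2 + ∑ a, X q (k, a)) := by
        intro q; rw [hmv_inr q]; simp [hz]
      simp only [h2]
      rw [Fintype.sum_prod_type]
      simp only [ite_mul, one_mul, zero_mul]
      rw [Finset.sum_comm]
      simp only [Finset.sum_ite_eq', Finset.mem_univ, if_true]
      have : ∀ b' : Fin m, -x k b' + ∑ a, X (k, b') (k, a) = 0 := by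
        intro b'
        have : ∑ a, X (k, b') (k, a) = x k b' := by
          simp [hdiag k b']
        rw [this]; ring
      simp [this]
    have hker := (hpsd.dotProduct_mulVec_zero_iff z).mp hquad
    have := congrFun hker (Sum.inr (j, b))
    rw [hmv_inr (j, b)] at this
    simp only [Pi.zero_apply] at this
    linarith
  intro i j _
  have hsymm : ∀ p q, X p q = X q p := by
    intro p q
    have := hpsd.isHermitian.apply (Sum.inr q) (Sum.inr p)
    simpa [hM, bordered] using this
  constructor
  · intro a
    exact key j i a
  · intro b
    rw [← key i j b]
    exact Finset.sum_congr rfl fun a _ => hsymm (i, a) (j, b)
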